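/- Let g ≥ 2 be an integer, r' a positive integer and d' an integer with gcd(r',d') = 1. Define F(t) = (1−t) · P^{ℍ}_{g}(2r',2d')(t) for real t > 0 with t ≠ 1. Then for all such t one has t^{4r'²(g−1)+1} · F(1/t) = F(t). -/

import Mathlib

open Finset

noncomputable section

/-- `ang x` is `⟨x⟩ = ⌊x⌋ + 1 - x`, the unique element of `(0,1]` with `x + ⟨x⟩ ∈ ℤ`. -/
def ang (x : ℝ) : ℝ := (⌊x⌋ : ℝ) + 1 - x

/-- `M(r₁,…,r_l; λ) = Σ_{i=1}^{l-1} (r_i + r_{i+1}) · ⟨(r₁+⋯+r_i)·λ⟩` for `L = [r₁,…,r_l]`. -/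
def Mfun (L : List ℕ) (lam : ℝ) : ℝ :=
  ∑ i ∈ Finset.range (L.length - 1),
    ((L.getD i 0 : ℝ) + (L.getD (i+1) 0 : ℝ)) * ang (((L.take (i+1)).sum : ℝ) * lam)

/-- `∏_{i=1}^{l-1} (1 - x^{m·(r_i + r_{i+1})})`. -/
def adjProd (x : ℝ) (m : ℕ) (L : List ℕ) : ℝ :=
  ∏ i ∈ Finset.range (L.length - 1), (1 - x ^ (m * (L.getD i 0 + L.getD (i+1) 0)))

/-- `Σ_{1 ≤ i < j ≤ l} r_i r_j`. -/
def pairSum (L : List ℕ) : ℝ :=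
  ∑ i ∈ Finset.range L.length, ∑ j ∈ Finset.Ico (i+1) L.length,
    (L.getD i 0 : ℝ) * (L.getD j 0 : ℝ)

/-- The block factor `∏_{j=1}^{2rᵢ}(1+t^{2j-1})^{g} / (∏_{j=1}^{rᵢ-1}(1-t^{4j}) ∏_{j=1}^{rᵢ}(1-t^{4j}))`. -/
def blockH (g : ℕ) (t : ℝ) (ri : ℕ) : ℝ :=
  (∏ j ∈ Finset.range (2*ri), (1 + t ^ (2*j+1)) ^ g) /
  ((∏ j ∈ Finset.range (ri - 1), (1 - t ^ (4*j+4))) * ∏ j ∈ Finset.range ri, (1 - t ^ (4*j+4)))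

/-- The closed formula `P^{ℍ}_g(2r,2d)(t)` (quaternionic bundles, real points present). -/
def PH (g r : ℕ) (d : ℤ) (t : ℝ) : ℝ :=
  ∑ c : Composition r,
    (-1 : ℝ) ^ (c.length - 1) *
    (t ^ (4 * Mfun c.blocks ((d : ℝ) / (r : ℝ))) / adjProd t 4 c.blocks) *
    t ^ (4 * ((g : ℝ) - 1) * pairSum c.blocks) *
    (c.blocks.map (blockH g t)).prod


/-! ### Auxiliary lemmas -/

lemma ang_add_int (x : ℝ) (n : ℤ) : ang (x + n) = ang x := by
  unfold ang; rw [Int.floor_add_intCast]; push_cast; ring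

lemma ang_neg_of_not_int (x : ℝ) (hx : ∀ n : ℤ, x ≠ (n : ℝ)) : ang (-x) = 1 - ang x := by
  unfold ang
  rw [Int.floor_neg]
  have h : ⌈x⌉ = ⌊x⌋ + 1 := by
    rw [Int.ceil_eq_iff]
    have h1 : (⌊x⌋ : ℝ) ≤ x := Int.floor_le x
    have h2 : x ≠ (⌊x⌋ : ℝ) := hx ⌊x⌋
    have h3 := Int.lt_floor_add_one x
    constructor
    · push_cast
      linarith [lt_of_le_of_ne h1 (Ne.symm h2)]
    · push_cast
      linarith
  rw [h]; push_cast; ring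

lemma getD_reverse' (L : List ℕ) (i : ℕ) (h : i < L.length) :
    L.reverse.getD i 0 = L.getD (L.length - 1 - i) 0 := by
  rw [List.getD_eq_getElem?_getD, List.getD_eq_getElem?_getD,
    List.getElem?_reverse (by simpa using h)]

lemma sum_take_reverse (L : List ℕ) (n : ℕ) :
    (L.reverse.take n).sum = L.sum - (L.take (L.length - n)).sum := by
  rw [List.take_reverse, List.sum_reverse]
  have h := congrArg List.sum (List.take_append_drop (L.length - n) L)
  rw [List.sum_append] at h
  omega

lemma sum_getD_eq (L : List ℕ) (f : ℕ → ℝ) :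
    ∑ i ∈ Finset.range L.length, f (L.getD i 0) = (L.map f).sum := by
  induction L with
  | nil => simp
  | cons a L ih =>
    rw [List.length_cons, Finset.sum_range_succ', List.map_cons, List.sum_cons]
    simp only [List.getD_cons_succ, List.getD_cons_zero, ih]
    ring

lemma two_mul_S2 (f : ℕ → ℝ) (n : ℕ) :
    2 * (∑ i ∈ Finset.range n, ∑ j ∈ Finset.Ico (i+1) n, f i * f j)
      = (∑ i ∈ Finset.range n, f i)^2 - ∑ i ∈ Finset.range n, (f i)^2 := by
  induction n with
  | zero => simp
  | succ n ih =>
    have step : (∑ i ∈ Finset.range (n+1), ∑ j ∈ Finset.Ico (i+1) (n+1), f i * f j)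
        = (∑ i ∈ Finset.range n, ∑ j ∈ Finset.Ico (i+1) n, f i * f j)
          + (∑ i ∈ Finset.range n, f i) * f n := by
      rw [Finset.sum_range_succ]
      have h1 : ∀ i ∈ Finset.range n, ∑ j ∈ Finset.Ico (i+1) (n+1), f i * f j
          = (∑ j ∈ Finset.Ico (i+1) n, f i * f j) + f i * f n := by
        intro i hi
        rw [Finset.sum_Ico_succ_top (by simp at hi; omega)]
      rw [Finset.sum_congr rfl h1, Finset.sum_add_distrib]
      simp [Finset.Ico_self, Finset.sum_mul]
    rw [step, Finset.sum_range_succ, Finset.sum_range_succ]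
    linear_combination ih

lemma sum_getD_cast (L : List ℕ) :
    ∑ i ∈ Finset.range L.length, (L.getD i 0 : ℝ)
      = List.sum (List.map (fun x : ℕ => (x:ℝ)) L) := by
  simpa using sum_getD_eq L (fun x : ℕ => (x:ℝ))

lemma sum_getD_sq (L : List ℕ) :
    ∑ i ∈ Finset.range L.length, ((L.getD i 0 : ℝ))^2
      = List.sum (List.map (fun x : ℕ => ((x:ℝ))^2) L) := by
  simpa using sum_getD_eq L (fun x : ℕ => ((x:ℝ))^2)

lemma pairSum_eq (L : List ℕ) :
    2 * pairSum L = (List.sum (List.map (fun x : ℕ => (x:ℝ)) L))^2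
      - List.sum (List.map (fun x : ℕ => ((x:ℝ))^2) L) := by
  unfold pairSum
  rw [two_mul_S2 (fun i => (L.getD i 0 : ℝ)) L.length, sum_getD_cast, sum_getD_sq]

lemma pairSum_reverse (L : List ℕ) : pairSum L.reverse = pairSum L := by
  have h1 := pairSum_eq L.reverse
  have h2 := pairSum_eq L
  rw [List.map_reverse, List.map_reverse, List.sum_reverse, List.sum_reverse] at h1
  linarith

lemma cast_list_sum (L : List ℕ) :
    ((L.sum : ℕ) : ℝ) = List.sum (List.map (fun x : ℕ => (x:ℝ)) L) := by
  induction L with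
  | nil => simp
  | cons a L ih =>
    rw [List.map_cons, List.sum_cons, List.sum_cons, ← ih]
    push_cast
    ring

lemma cast_list_sum_sq (L : List ℕ) :
    (((L.map (fun x => x^2)).sum : ℕ) : ℝ)
      = List.sum (List.map (fun x : ℕ => ((x:ℝ))^2) L) := by
  induction L with
  | nil => simp
  | cons a L ih =>
    rw [List.map_cons, List.sum_cons, List.map_cons, List.sum_cons, ← ih]
    push_cast
    ring

lemma adjProd_reverse (x : ℝ) (m : ℕ) (L : List ℕ) :
    adjProd x m L.reverse = adjProd x m L := by
  unfold adjProd
  rw [List.length_reverse]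
  conv_lhs => rw [← Finset.prod_range_reflect]
  apply Finset.prod_congr rfl
  intro i hi
  simp only [Finset.mem_range] at hi
  rw [getD_reverse' L _ (by omega), getD_reverse' L _ (by omega),
    show L.length - 1 - (L.length - 1 - 1 - i) = i + 1 by omega,
    show L.length - 1 - (L.length - 1 - 1 - i + 1) = i by omega,
    Nat.add_comm (L.getD (i+1) 0)]

lemma take_sum_pos (L : List ℕ) (hpos : ∀ x ∈ L, 0 < x) (k : ℕ) (hk : 0 < k)
    (hl : 0 < L.length) : 0 < (L.take k).sum := by
  apply List.sum_pos
  · exact fun x hx => hpos x (List.take_subset k L hx)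
  · intro h
    have hlen := congrArg List.length h
    rw [List.length_take, List.length_nil] at hlen
    omega

lemma drop_sum_pos (L : List ℕ) (hpos : ∀ x ∈ L, 0 < x) (k : ℕ) (hk : k < L.length) :
    0 < (L.drop k).sum := by
  apply List.sum_pos
  · exact fun x hx => hpos x (List.drop_subset k L hx)
  · intro h
    have hlen := congrArg List.length h
    rw [List.length_drop, List.length_nil] at hlen
    omega

lemma Mfun_reverse (r : ℕ) (hr : 0 < r) (d : ℤ) (hcop : Int.gcd (r:ℤ) d = 1)
    (L : List ℕ) (hpos : ∀ x ∈ L, 0 < x) (hsum : L.sum = r) :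
    Mfun L.reverse ((d:ℝ)/(r:ℝ))
      = (∑ i ∈ Finset.range (L.length - 1),
          ((L.getD i 0 : ℝ) + (L.getD (i+1) 0 : ℝ))) - Mfun L ((d:ℝ)/(r:ℝ)) := by
  unfold Mfun
  rw [List.length_reverse, ← Finset.sum_sub_distrib]
  conv_lhs => rw [← Finset.sum_range_reflect]
  apply Finset.sum_congr rfl
  intro i hi
  simp only [Finset.mem_range] at hi
  have hl2 : 2 ≤ L.length := by omega
  set s : ℕ := (L.take (i+1)).sum with hs
  have hspos : 0 < s := take_sum_pos L hpos (i+1) (by omega) (by omega)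
  have hslt : s < r := by
    have hsplit := congrArg List.sum (List.take_append_drop (i+1) L)
    rw [List.sum_append] at hsplit
    have hdpos : 0 < (L.drop (i+1)).sum := drop_sum_pos L hpos (i+1) (by omega)
    omega
  have hr0 : (r:ℝ) ≠ 0 := Nat.cast_ne_zero.mpr hr.ne'
  have hni : ∀ n : ℤ, (s:ℝ) * ((d:ℝ)/(r:ℝ)) ≠ (n:ℝ) := by
    intro n hn
    rw [mul_div_assoc'] at hn
    have h' : (s:ℝ) * (d:ℝ) = (n:ℝ) * r := (div_eq_iff hr0).mp hn
    have hz : (s:ℤ) * d = n * r := by exact_mod_cast h'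
    have hdvd : (r:ℤ) ∣ (s:ℤ) * d := ⟨n, by rw [hz]; ring⟩
    have hcop' : IsCoprime (r:ℤ) d := Int.isCoprime_iff_gcd_eq_one.mpr hcop
    have hds : (r:ℤ) ∣ (s:ℤ) := hcop'.dvd_of_dvd_mul_right hdvd
    have hds' : r ∣ s := by exact_mod_cast hds
    have := Nat.le_of_dvd hspos hds'
    omega
  rw [getD_reverse' L _ (by omega), getD_reverse' L _ (by omega),
    show L.length - 1 - (L.length - 1 - 1 - i) = i + 1 by omega,
    show L.length - 1 - (L.length - 1 - 1 - i + 1) = i by omega]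
  have htake : ((L.reverse.take (L.length - 1 - 1 - i + 1)).sum : ℕ) = r - s := by
    rw [show L.length - 1 - 1 - i + 1 = L.length - (i+1) by omega, sum_take_reverse,
      show L.length - (L.length - (i+1)) = i + 1 by omega, hsum]
  rw [htake]
  have hcast : ((r - s : ℕ) : ℝ) = (r:ℝ) - (s:ℝ) := by
    push_cast [Nat.cast_sub hslt.le]; ring
  rw [hcast]
  have hsplit : ((r:ℝ) - (s:ℝ)) * ((d:ℝ)/(r:ℝ)) = -((s:ℝ) * ((d:ℝ)/(r:ℝ))) + (d:ℝ) := by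
    field_simp
    ring
  rw [hsplit, ang_add_int _ d, ang_neg_of_not_int _ hni]
  ring

lemma one_sub_pow_ne_zero {t : ℝ} (ht : 0 < t) (ht1 : t ≠ 1) {n : ℕ} (hn : 0 < n) :
    1 - t ^ n ≠ 0 := by
  rcases lt_or_gt_of_ne ht1 with h | h
  · have := pow_lt_one₀ ht.le h hn.ne'
    intro hc; linarith
  · have := one_lt_pow₀ h hn.ne'
    intro hc; linarith

lemma sum_odd (n : ℕ) : ∑ j ∈ Finset.range n, (2*j+1) = n^2 := by
  induction n with
  | zero => simp
  | succ n ih => rw [Finset.sum_range_succ, ih]; ring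

lemma sum_four (n : ℕ) : ∑ j ∈ Finset.range n, (4*j+4) = 2*n^2 + 2*n := by
  induction n with
  | zero => simp
  | succ n ih => rw [Finset.sum_range_succ, ih]; ring

lemma adjProd_inv (t : ℝ) (ht : 0 < t) (L : List ℕ) :
    adjProd (1/t) 4 L = (-1 : ℝ)^(L.length - 1) *
      (t ^ (∑ i ∈ Finset.range (L.length - 1), 4 * (L.getD i 0 + L.getD (i+1) 0)))⁻¹ *
      adjProd t 4 L := by
  unfold adjProd
  have key : ∀ i ∈ Finset.range (L.length - 1),
      (1 - (1/t) ^ (4 * (L.getD i 0 + L.getD (i+1) 0)))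
      = (-1 : ℝ) * ((t ^ (4 * (L.getD i 0 + L.getD (i+1) 0)))⁻¹
          * (1 - t ^ (4 * (L.getD i 0 + L.getD (i+1) 0)))) := by
    intro i _
    have h0 : t ^ (4 * (L.getD i 0 + L.getD (i+1) 0)) ≠ 0 := pow_ne_zero _ ht.ne'
    rw [one_div, inv_pow]
    field_simp
    try ring
  rw [Finset.prod_congr rfl key, Finset.prod_mul_distrib, Finset.prod_mul_distrib,
    Finset.prod_const, Finset.card_range, Finset.prod_inv_distrib,
    Finset.prod_pow_eq_pow_sum, mul_assoc]

lemma blockH_inv (g : ℕ) (hg : 1 ≤ g) (t : ℝ) (ht : 0 < t) (ht1 : t ≠ 1)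
    (ri : ℕ) (hri : 0 < ri) :
    blockH g (1/t) ri = (-1 : ℝ) * (t ^ (4 * ri^2 * (g-1)))⁻¹ * blockH g t ri := by
  obtain ⟨k, rfl⟩ : ∃ k, ri = k + 1 := ⟨ri - 1, by omega⟩
  obtain ⟨e, rfl⟩ : ∃ e, g = e + 1 := ⟨g - 1, by omega⟩
  unfold blockH
  have ht0 : t ≠ 0 := ht.ne'
  have HN : ∏ j ∈ Finset.range (2*(k+1)), (1 + (1/t) ^ (2*j+1)) ^ (e+1)
      = (t ^ ((2*(k+1))^2*(e+1)))⁻¹ * ∏ j ∈ Finset.range (2*(k+1)), (1 + t ^ (2*j+1)) ^ (e+1) := by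
    have hnum : ∀ j ∈ Finset.range (2*(k+1)),
        (1 + (1/t) ^ (2*j+1)) ^ (e+1)
          = ((t ^ ((2*j+1)*(e+1)))⁻¹) * (1 + t ^ (2*j+1)) ^ (e+1) := by
      intro j _
      have h0 : t ^ (2*j+1) ≠ 0 := pow_ne_zero _ ht.ne'
      rw [show (1 + (1/t) ^ (2*j+1)) = (t ^ (2*j+1))⁻¹ * (1 + t ^ (2*j+1)) by
          rw [one_div, inv_pow]; field_simp; try ring,
        mul_pow, inv_pow, ← pow_mul]
    rw [Finset.prod_congr rfl hnum, Finset.prod_mul_distrib, Finset.prod_inv_distrib,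
      Finset.prod_pow_eq_pow_sum, ← Finset.sum_mul, sum_odd]
  have HD : ∀ m : ℕ, ∏ j ∈ Finset.range m, (1 - (1/t) ^ (4*j+4))
      = (-1 : ℝ)^m * ((t ^ (2*m^2+2*m))⁻¹ * ∏ j ∈ Finset.range m, (1 - t ^ (4*j+4))) := by
    intro m
    have hden : ∀ j ∈ Finset.range m,
        (1 - (1/t) ^ (4*j+4))
          = (-1 : ℝ) * ((t ^ (4*j+4))⁻¹ * (1 - t ^ (4*j+4))) := by
      intro j _
      have h0 : t ^ (4*j+4) ≠ 0 := pow_ne_zero _ ht.ne'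
      rw [one_div, inv_pow]
      field_simp
      try ring
    rw [Finset.prod_congr rfl hden, Finset.prod_mul_distrib, Finset.prod_mul_distrib,
      Finset.prod_const, Finset.card_range, Finset.prod_inv_distrib,
      Finset.prod_pow_eq_pow_sum, sum_four]
  rw [HN, HD, HD]
  simp only [show (k+1)-1 = k from rfl, show (e+1)-1 = e from rfl]
  have hD1 : (∏ j ∈ Finset.range k, (1 - t ^ (4*j+4))) ≠ 0 :=
    Finset.prod_ne_zero_iff.mpr fun j _ => one_sub_pow_ne_zero ht ht1 (by omega)
  have hD2 : (∏ j ∈ Finset.range (k+1), (1 - t ^ (4*j+4))) ≠ 0 :=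
    Finset.prod_ne_zero_iff.mpr fun j _ => one_sub_pow_ne_zero ht ht1 (by omega)
  have hsign : ((-1:ℝ))^k * ((t ^ (2*k^2+2*k))⁻¹ * ∏ j ∈ Finset.range k, (1 - t ^ (4*j+4)))
      * ((-1:ℝ)^(k+1) * ((t ^ (2*(k+1)^2+2*(k+1)))⁻¹ * ∏ j ∈ Finset.range (k+1), (1 - t ^ (4*j+4))))
      = -1 * (((t ^ (2*k^2+2*k))⁻¹ * ∏ j ∈ Finset.range k, (1 - t ^ (4*j+4)))
          * ((t ^ (2*(k+1)^2+2*(k+1)))⁻¹ * ∏ j ∈ Finset.range (k+1), (1 - t ^ (4*j+4)))) := by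
    have hh : ((-1:ℝ))^k * (-1:ℝ)^(k+1) = -1 := by
      rw [← pow_add]
      exact Odd.neg_one_pow ⟨k, by ring⟩
    calc ((-1:ℝ))^k * ((t ^ (2*k^2+2*k))⁻¹ * ∏ j ∈ Finset.range k, (1 - t ^ (4*j+4)))
      * ((-1:ℝ)^(k+1) * ((t ^ (2*(k+1)^2+2*(k+1)))⁻¹ * ∏ j ∈ Finset.range (k+1), (1 - t ^ (4*j+4))))
        = (((-1:ℝ))^k * (-1:ℝ)^(k+1)) * (((t ^ (2*k^2+2*k))⁻¹ * ∏ j ∈ Finset.range k, (1 - t ^ (4*j+4)))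
          * ((t ^ (2*(k+1)^2+2*(k+1)))⁻¹ * ∏ j ∈ Finset.range (k+1), (1 - t ^ (4*j+4)))) := by ring
      _ = -1 * (((t ^ (2*k^2+2*k))⁻¹ * ∏ j ∈ Finset.range k, (1 - t ^ (4*j+4)))
          * ((t ^ (2*(k+1)^2+2*(k+1)))⁻¹ * ∏ j ∈ Finset.range (k+1), (1 - t ^ (4*j+4)))) := by rw [hh]
  rw [hsign]
  rw [show (2*(k+1))^2*(e+1) = (4*(k+1)^2*e) + (2*k^2+2*k) + (2*(k+1)^2+2*(k+1)) by ring,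
    pow_add, pow_add]
  field_simp

lemma prod_blockH_inv (g : ℕ) (hg : 1 ≤ g) (t : ℝ) (ht : 0 < t) (ht1 : t ≠ 1)
    (L : List ℕ) (hL : ∀ x ∈ L, 0 < x) :
    (L.map (blockH g (1/t))).prod
      = (-1:ℝ)^L.length * (t ^ (4 * (g-1) * ((L.map (fun x => x^2)).sum)))⁻¹
        * (L.map (blockH g t)).prod := by
  induction L with
  | nil => simp
  | cons a L ih =>
    rw [List.map_cons, List.prod_cons,
      blockH_inv g hg t ht ht1 a (hL a List.mem_cons_self),
      ih (fun x hx => hL x (List.mem_cons_of_mem a hx))]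
    simp only [List.length_cons, List.map_cons, List.prod_cons, List.sum_cons]
    have h0 : t ≠ 0 := ht.ne'
    have hsplit : (t ^ (4*a^2*(g-1) + 4*(g-1)*((L.map (fun x => x^2)).sum)))⁻¹
        = (t ^ (4*a^2*(g-1)))⁻¹ * (t ^ (4*(g-1)*((L.map (fun x => x^2)).sum)))⁻¹ := by
      rw [pow_add, mul_inv]
    rw [show 4*(g-1)*(a^2 + (L.map (fun x => x^2)).sum)
        = 4*a^2*(g-1) + 4*(g-1)*((L.map (fun x => x^2)).sum) by ring,
      hsplit]
    ring

lemma key_scalar (t : ℝ) (ht : 0 < t) (ht1 : t ≠ 1) (l : ℕ) (hl : 1 ≤ l)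
    (M AR P G R a q D B : ℝ) (hD : D ≠ 0)
    (ha : a = 4 * AR) (hq : q = 4*(G-1)*R^2 - 8*(G-1)*P) :
    t ^ (4*R^2*(G-1) + 1) * ((1 - 1/t) *
      ((-1:ℝ)^(l-1) * ((1/t) ^ (4*M) / ((-1:ℝ)^(l-1) * (t ^ a)⁻¹ * D)) *
        (1/t) ^ (4*(G-1)*P) * ((-1:ℝ)^l * (t ^ q)⁻¹ * B)))
    = (1-t) * ((-1:ℝ)^(l-1) * (t ^ (4*(AR - M)) / D) * t ^ (4*(G-1)*P) * B) := by
  obtain ⟨k, rfl⟩ : ∃ k, l = k+1 := ⟨l-1, by omega⟩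
  subst ha hq
  have h2 : ∀ x:ℝ, (1/t)^x = t^(-x) := fun x => by
    rw [one_div, Real.inv_rpow ht.le, ← Real.rpow_neg ht.le]
  have h3 : ∀ x:ℝ, (t^x)⁻¹ = t^(-x) := fun x => (Real.rpow_neg ht.le x).symm
  have h1 : (1:ℝ) - 1/t = -(1-t) / t := by field_simp; ring
  rw [h1, h2, h2, h3, h3]
  set A1 := t ^ (4*AR) with hA1d
  set A2 := t ^ (4*M) with hA2d
  set A3 := t ^ (4*(G-1)*P) with hA3d
  set A4 := t ^ (4*R^2*(G-1)) with hA4d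
  have e0 : t ^ (4*R^2*(G-1)+1) = A4 * t := by
    rw [Real.rpow_add ht, Real.rpow_one, hA4d]
  have e1 : t ^ (-(4*M)) = A2⁻¹ := by
    rw [Real.rpow_neg ht.le, hA2d]
  have e2 : t ^ (-(4*(G-1)*P)) = A3⁻¹ := by
    rw [Real.rpow_neg ht.le, hA3d]
  have e3 : t ^ (-(4*(G-1)*R^2 - 8*(G-1)*P)) = A4⁻¹ * (A3*A3) := by
    rw [show -(4*(G-1)*R^2 - 8*(G-1)*P) = -(4*R^2*(G-1)) + (4*(G-1)*P + 4*(G-1)*P) by ring,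
      Real.rpow_add ht, Real.rpow_add ht, Real.rpow_neg ht.le, hA3d, hA4d]
  have e4 : t ^ (-(4*AR)) = A1⁻¹ := by
    rw [Real.rpow_neg ht.le, hA1d]
  have e5 : t ^ (4*(AR - M)) = A1 * A2⁻¹ := by
    rw [show 4*(AR - M) = 4*AR + -(4*M) by ring, Real.rpow_add ht, Real.rpow_neg ht.le,
      hA1d, hA2d]
  rw [e0, e1, e2, e3, e4, e5]
  have hA1 : A1 ≠ 0 := (Real.rpow_pos_of_pos ht _).ne'
  have hA2 : A2 ≠ 0 := (Real.rpow_pos_of_pos ht _).ne'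
  have hA3 : A3 ≠ 0 := (Real.rpow_pos_of_pos ht _).ne'
  have hA4 : A4 ≠ 0 := (Real.rpow_pos_of_pos ht _).ne'
  have hk : ((-1:ℝ))^k ≠ 0 := by positivity
  simp only [Nat.add_sub_cancel, pow_succ]
  field_simp

def compReverse {n : ℕ} (c : Composition n) : Composition n :=
  ⟨c.blocks.reverse, fun hi => c.blocks_pos (List.mem_reverse.mp hi),
    by rw [List.sum_reverse, c.blocks_sum]⟩

lemma compReverse_involutive {n : ℕ} : Function.Involutive (compReverse (n := n)) := by
  intro c
  cases c
  simp [compReverse]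

def compReverseEquiv (n : ℕ) : Equiv.Perm (Composition n) :=
  Function.Involutive.toPerm _ (compReverse_involutive (n := n))

/-- Strange Poincaré duality for `(1-t)·P^{ℍ}_g(2r',2d')`
(Theorem `strange_Poincare_duality_tauH_with_real_points`). -/
theorem stmt3 (g r' : ℕ) (hg : 2 ≤ g) (hr : 0 < r')
    (d' : ℤ) (hcop : Int.gcd (r' : ℤ) d' = 1)
    (t : ℝ) (ht : 0 < t) (ht1 : t ≠ 1) :
    t ^ (4 * (r' : ℝ)^2 * ((g : ℝ) - 1) + 1) * ((1 - 1/t) * PH g r' d' (1/t)) =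
      (1 - t) * PH g r' d' t := by
  unfold PH
  rw [Finset.mul_sum, Finset.mul_sum, Finset.mul_sum]
  apply Fintype.sum_equiv (compReverseEquiv r')
  intro c
  have hrev : compReverseEquiv r' c = compReverse c := rfl
  rw [hrev]
  have hblocks : (compReverse c).blocks = c.blocks.reverse := rfl
  have hlenrev : (compReverse c).length = c.blocks.length := by
    show c.blocks.reverse.length = c.blocks.length
    exact List.length_reverse
  rw [hblocks, hlenrev]
  set L := c.blocks with hLd
  rw [show Composition.length c = L.length from rfl]
  have hpos : ∀ x ∈ L, 0 < x := fun x hx => c.blocks_pos hx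
  have hsum : L.sum = r' := c.blocks_sum
  have hlen1 : 1 ≤ L.length := by
    rcases hL : L with _ | ⟨a, L'⟩
    · rw [hL] at hsum; simp at hsum; omega
    · simp
  rw [Mfun_reverse r' hr d' hcop L hpos hsum, adjProd_reverse, adjProd_inv t ht L,
    pairSum_reverse, List.map_reverse, List.prod_reverse,
    prod_blockH_inv g (by omega) t ht ht1 L hpos]
  rw [← Real.rpow_natCast t (∑ i ∈ Finset.range (L.length - 1), 4 * (L.getD i 0 + L.getD (i+1) 0)),
    ← Real.rpow_natCast t (4 * (g-1) * ((L.map (fun x => x^2)).sum))]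
  have hD : adjProd t 4 L ≠ 0 := by
    unfold adjProd
    apply Finset.prod_ne_zero_iff.mpr
    intro i hi
    simp only [Finset.mem_range] at hi
    have hmem : L.getD i 0 ∈ L := by
      rw [List.getD_eq_getElem L 0 (by omega)]
      exact List.getElem_mem _
    exact one_sub_pow_ne_zero ht ht1 (by have := hpos _ hmem; omega)
  have ha : ((∑ i ∈ Finset.range (L.length - 1), 4 * (L.getD i 0 + L.getD (i+1) 0) : ℕ) : ℝ)
      = 4 * (∑ i ∈ Finset.range (L.length - 1), ((L.getD i 0 : ℝ) + (L.getD (i+1) 0 : ℝ))) := by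
    rw [Nat.cast_sum, Finset.mul_sum]
    apply Finset.sum_congr rfl
    intro i _
    push_cast
    ring
  have hq : ((4 * (g-1) * ((L.map (fun x => x^2)).sum) : ℕ) : ℝ)
      = 4*(((g:ℝ))-1)*((r':ℝ))^2 - 8*(((g:ℝ))-1)*(pairSum L) := by
    have h1 : (((L.map (fun x => x^2)).sum : ℕ) : ℝ)
        = List.sum (List.map (fun x : ℕ => ((x:ℝ))^2) L) := cast_list_sum_sq L
    have h2 := pairSum_eq L
    have h3 : List.sum (List.map (fun x : ℕ => (x:ℝ)) L) = ((r':ℕ):ℝ) := by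
      rw [← cast_list_sum, hsum]
    rw [h3] at h2
    have h4 : ((g - 1 : ℕ) : ℝ) = (g:ℝ) - 1 := by
      push_cast [Nat.cast_sub (by omega : 1 ≤ g)]
      ring
    push_cast [h4, h1]
    nlinarith [h2]
  exact key_scalar t ht ht1 L.length hlen1 (Mfun L ((d':ℝ)/((r':ℕ):ℝ)))
    (∑ i ∈ Finset.range (L.length - 1), ((L.getD i 0 : ℝ) + (L.getD (i+1) 0 : ℝ)))
    (pairSum L) ((g:ℝ)) ((r':ℝ)) _ _ (adjProd t 4 L) ((L.map (blockH g t)).prod) hD ha hq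

end
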